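/- If the triangle P1P2P3 is nondegenerate and the weight conditions (W) hold, then the point P* = (x*, y*) with x* = (K1K2K3/(4 S σ d))·(x1/K1 + x2/K2 + x3/K3) and y* = (K1K2K3/(4 S σ d))·(y1/K1 + y2/K2 + y3/K3) is a stationary point of F, i.e. Σ_{j=1}^3 m_j (x* − x_j)/√((x*−x_j)²+(y*−y_j)²) = 0 and Σ_{j=1}^3 m_j (y* − y_j)/√((x*−x_j)²+(y*−y_j)²) = 0. -/

import Mathlib

set_option maxHeartbeats 1000000 in
private lemma keyI' (s S u v D a b c K1 K2 K3 : ℝ)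
    (hs : s^2 = (2*a*b+2*a*c+2*b*c-a^2-b^2-c^2)/4)
    (hB : S^2 = u*v - D^2)
    (h1 : K1 = 2*D*s + (b+c-a)*S)
    (h2 : K2 = 2*(u-D)*s + (a+c-b)*S)
    (h3 : K3 = 2*(v-D)*s + (a+b-c)*S) :
    K1*K2+K1*K3+K2*K3 = 2*S*(a*K1+b*K2+c*K3) := by
  subst h1 h2 h3
  linear_combination (4*u*v - 4*D^2) * hs
    + (a^2+b^2+c^2-2*a*b-2*a*c-2*b*c) * hB

set_option maxHeartbeats 1000000 in
private lemma keyL' (s S u v D a b c K1 K2 K3 : ℝ)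
    (hs : s^2 = (2*a*b+2*a*c+2*b*c-a^2-b^2-c^2)/4)
    (hB : S^2 = u*v - D^2)
    (h1 : K1 = 2*D*s + (b+c-a)*S)
    (h2 : K2 = 2*(u-D)*s + (a+c-b)*S)
    (h3 : K3 = 2*(v-D)*s + (a+b-c)*S) :
    2*s*(K3^2*u + 2*K2*K3*D + K2^2*v) = 4*a*S^2*(a*K1+b*K2+c*K3) := by
  subst h1 h2 h3
  linear_combination
    (16*S*a*(u*v - D^2) + 8*s*(2*D^3 - v*D^2 - u*D^2 - 2*u*v*D + u*v^2 + u^2*v)) * hs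
    + (4*S*a*(c^2-2*b*c+b^2-2*a*c-2*a*b+a^2)
       + s*((-4*D+2*v+2*u)*(c^2-2*b*c+b^2-2*a*c-2*a*b+a^2))) * hB

private lemma sin_add_pos' (C Sn P Q : ℝ) (hSn : 0 < Sn) (hQ : 0 < Q)
    (h1 : C^2+Sn^2=1) (h2 : P^2+Q^2=1) (h3 : 0 < C+P) : 0 < Q*C+P*Sn := by
  rcases le_or_gt C 0 with hC|hC
  · have hP : 0 < P := by nlinarith
    have : Sn ^ 2 > Q ^ 2 := by nlinarith
    nlinarith [mul_pos hP hSn, mul_pos hQ hSn]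
  · rcases le_or_gt P 0 with hP|hP
    · have : C ^ 2 > P ^ 2 := by nlinarith
      nlinarith [mul_pos hQ hC, mul_pos hQ hSn]
    · positivity

private lemma aux_sq0 {p q : ℝ} (h : p^2 + q^2 = 0) : p = 0 ∧ q = 0 := by
  constructor <;> nlinarith [sq_nonneg p, sq_nonneg q]

private lemma aux_CP {a b c X : ℝ} (hb : 0 < b) (hc : 0 < c)
    (h : a^2 < b^2 + c^2 + 2*b*c*X) :
    0 < X + (b^2+c^2-a^2)/(2*b*c) := by
  have h2 : 0 < 2*(b*c)*X + (b^2+c^2-a^2) := by nlinarith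
  have h3 : X + (b^2+c^2-a^2)/(2*b*c) = (2*(b*c)*X + (b^2+c^2-a^2))/(2*(b*c)) := by
    field_simp
  rw [h3]; exact div_pos h2 (by positivity)

private lemma aux_tri {a b c X : ℝ} (ha : 0 < a) (hb : 0 < b) (hc : 0 < c)
    (hX : X < 1) (h : a^2 < b^2 + c^2 + 2*b*c*X) : a < b + c := by
  have : a^2 < (b+c)^2 := by nlinarith [mul_pos hb hc]
  exact lt_of_pow_lt_pow_left₀ 2 (by positivity) this

set_option maxHeartbeats 4000000 in
/-- The point `P* = (x*, y*)` given by the explicit formulas is a stationary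
point of `F`. -/
theorem explicit_point_is_stationary
        (x1 y1 x2 y2 x3 y3 m1 m2 m3 : ℝ)
    (hm1 : 0 < m1) (hm2 : 0 < m2) (hm3 : 0 < m3)
    (hnd : x1*y2 + x2*y3 + x3*y1 - x1*y3 - x3*y2 - x2*y1 ≠ 0)
    (r12 r13 r23 S σ K1 K2 K3 : ℝ)
    (hr12 : r12 = Real.sqrt ((x1-x2)^2 + (y1-y2)^2))
    (hr13 : r13 = Real.sqrt ((x1-x3)^2 + (y1-y3)^2))
    (hr23 : r23 = Real.sqrt ((x2-x3)^2 + (y2-y3)^2))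
    (hS : S = |x1*y2 + x2*y3 + x3*y1 - x1*y3 - x3*y2 - x2*y1|)
    (hσ : σ = (1/2) * Real.sqrt
        (-m1^4 - m2^4 - m3^4 + 2*m1^2*m2^2 + 2*m1^2*m3^2 + 2*m2^2*m3^2))
    (hK1 : K1 = (r12^2 + r13^2 - r23^2)*σ + (m2^2 + m3^2 - m1^2)*S)
    (hK2 : K2 = (r23^2 + r12^2 - r13^2)*σ + (m1^2 + m3^2 - m2^2)*S)
    (hK3 : K3 = (r13^2 + r23^2 - r12^2)*σ + (m1^2 + m2^2 - m3^2)*S)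
    (cosα1 cosα2 cosα3 : ℝ)
    (hc1 : cosα1 = ((x2-x1)*(x3-x1) + (y2-y1)*(y3-y1)) / (r12 * r13))
    (hc2 : cosα2 = ((x1-x2)*(x3-x2) + (y1-y2)*(y3-y2)) / (r12 * r23))
    (hc3 : cosα3 = ((x1-x3)*(x2-x3) + (y1-y3)*(y2-y3)) / (r13 * r23))
    (hW1 : m1^2 < m2^2 + m3^2 + 2*m2*m3*cosα1)
    (hW2 : m2^2 < m1^2 + m3^2 + 2*m1*m3*cosα2)
    (hW3 : m3^2 < m1^2 + m2^2 + 2*m1*m2*cosα3)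
    (d : ℝ)
    (hd : d = (m1^2*K1 + m2^2*K2 + m3^2*K3) / (2*σ))
    (xs ys : ℝ)
    (hxs : xs = (K1*K2*K3/(4*S*σ*d)) * (x1/K1 + x2/K2 + x3/K3))
    (hys : ys = (K1*K2*K3/(4*S*σ*d)) * (y1/K1 + y2/K2 + y3/K3)) :
    (m1*(xs-x1)/Real.sqrt ((xs-x1)^2 + (ys-y1)^2)
      + m2*(xs-x2)/Real.sqrt ((xs-x2)^2 + (ys-y2)^2)
      + m3*(xs-x3)/Real.sqrt ((xs-x3)^2 + (ys-y3)^2) = 0) ∧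
    (m1*(ys-y1)/Real.sqrt ((xs-x1)^2 + (ys-y1)^2)
      + m2*(ys-y2)/Real.sqrt ((xs-x2)^2 + (ys-y2)^2)
      + m3*(ys-y3)/Real.sqrt ((xs-x3)^2 + (ys-y3)^2) = 0) := by
  have hS0 : 0 < S := by rw [hS]; exact abs_pos.mpr hnd
  have hSsq : S^2 = (x1*y2 + x2*y3 + x3*y1 - x1*y3 - x3*y2 - x2*y1)^2 := by rw [hS]; exact sq_abs _
  have hu : r12^2 = ((x1-x2)^2 + (y1-y2)^2) := by rw [hr12]; exact Real.sq_sqrt (by positivity)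
  have hv : r13^2 = ((x1-x3)^2 + (y1-y3)^2) := by rw [hr13]; exact Real.sq_sqrt (by positivity)
  have hw : r23^2 = ((x2-x3)^2 + (y2-y3)^2) := by rw [hr23]; exact Real.sq_sqrt (by positivity)
  have hu0 : 0 < ((x1-x2)^2 + (y1-y2)^2) := by
    rcases lt_or_eq_of_le (by positivity : (0:ℝ) ≤ ((x1-x2)^2 + (y1-y2)^2)) with h|h
    · exact h
    · exfalso; apply hnd
      obtain ⟨e1, e2⟩ := aux_sq0 h.symm
      have e1' : x1 = x2 := by linarith
      have e2' : y1 = y2 := by linarith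
      rw [e1', e2']; ring
  have hv0 : 0 < ((x1-x3)^2 + (y1-y3)^2) := by
    rcases lt_or_eq_of_le (by positivity : (0:ℝ) ≤ ((x1-x3)^2 + (y1-y3)^2)) with h|h
    · exact h
    · exfalso; apply hnd
      obtain ⟨e1, e2⟩ := aux_sq0 h.symm
      have e1' : x1 = x3 := by linarith
      have e2' : y1 = y3 := by linarith
      rw [e1', e2']; ring
  have hw0 : 0 < ((x2-x3)^2 + (y2-y3)^2) := by
    rcases lt_or_eq_of_le (by positivity : (0:ℝ) ≤ ((x2-x3)^2 + (y2-y3)^2)) with h|h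
    · exact h
    · exfalso; apply hnd
      obtain ⟨e1, e2⟩ := aux_sq0 h.symm
      have e1' : x2 = x3 := by linarith
      have e2' : y2 = y3 := by linarith
      rw [e1', e2']; ring
  have hr120 : 0 < r12 := by rw [hr12]; exact Real.sqrt_pos.mpr hu0
  have hr130 : 0 < r13 := by rw [hr13]; exact Real.sqrt_pos.mpr hv0
  have hr230 : 0 < r23 := by rw [hr23]; exact Real.sqrt_pos.mpr hw0
  -- Lagrange identities
  have hB1 : S^2 = ((x1-x2)^2 + (y1-y2)^2) * ((x1-x3)^2 + (y1-y3)^2) - ((x2-x1)*(x3-x1) + (y2-y1)*(y3-y1))^2 := by linear_combination hSsq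
  have hB2 : S^2 = ((x1-x2)^2 + (y1-y2)^2) * ((x2-x3)^2 + (y2-y3)^2) - ((x1-x2)*(x3-x2) + (y1-y2)*(y3-y2))^2 := by linear_combination hSsq
  have hB3 : S^2 = ((x1-x3)^2 + (y1-y3)^2) * ((x2-x3)^2 + (y2-y3)^2) - ((x1-x3)*(x2-x3) + (y1-y3)*(y2-y3))^2 := by linear_combination hSsq
  -- strict Cauchy-Schwarz, hence cosines < 1
  have hS20 : 0 < S^2 := by positivity
  have hCS1 : ((x2-x1)*(x3-x1) + (y2-y1)*(y3-y1)) < r12 * r13 := by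
    refine lt_of_pow_lt_pow_left₀ 2 (by positivity) ?_
    have : (r12*r13)^2 = ((x1-x2)^2 + (y1-y2)^2) * ((x1-x3)^2 + (y1-y3)^2) := by rw [mul_pow, hu, hv]
    rw [this]; linarith [hB1, hS20]
  have hCS2 : ((x1-x2)*(x3-x2) + (y1-y2)*(y3-y2)) < r12 * r23 := by
    refine lt_of_pow_lt_pow_left₀ 2 (by positivity) ?_
    have : (r12*r23)^2 = ((x1-x2)^2 + (y1-y2)^2) * ((x2-x3)^2 + (y2-y3)^2) := by rw [mul_pow, hu, hw]
    rw [this]; linarith [hB2, hS20]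
  have hCS3 : ((x1-x3)*(x2-x3) + (y1-y3)*(y2-y3)) < r13 * r23 := by
    refine lt_of_pow_lt_pow_left₀ 2 (by positivity) ?_
    have : (r13*r23)^2 = ((x1-x3)^2 + (y1-y3)^2) * ((x2-x3)^2 + (y2-y3)^2) := by rw [mul_pow, hv, hw]
    rw [this]; linarith [hB3, hS20]
  have hcos1 : cosα1 < 1 := by rw [hc1, div_lt_one (by positivity)]; exact hCS1
  have hcos2 : cosα2 < 1 := by rw [hc2, div_lt_one (by positivity)]; exact hCS2
  have hcos3 : cosα3 < 1 := by rw [hc3, div_lt_one (by positivity)]; exact hCS3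
  have ht1 : m1 < m2 + m3 := aux_tri hm1 hm2 hm3 hcos1 hW1
  have ht2 : m2 < m1 + m3 := aux_tri hm2 hm1 hm3 hcos2 hW2
  have ht3 : m3 < m1 + m2 := aux_tri hm3 hm1 hm2 hcos3 hW3
  have hval : 0 < -m1^4 - m2^4 - m3^4 + 2*m1^2*m2^2 + 2*m1^2*m3^2 + 2*m2^2*m3^2 := by
    have e : -m1^4 - m2^4 - m3^4 + 2*m1^2*m2^2 + 2*m1^2*m3^2 + 2*m2^2*m3^2
        = (m1+m2+m3)*((m2+m3)-m1)*((m1+m3)-m2)*((m1+m2)-m3) := by ring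
    rw [e]
    have p1 : (0:ℝ) < m1+m2+m3 := by positivity
    have p2 : (0:ℝ) < (m2+m3)-m1 := by linarith
    have p3 : (0:ℝ) < (m1+m3)-m2 := by linarith
    have p4 : (0:ℝ) < (m1+m2)-m3 := by linarith
    positivity
  have hσ0 : 0 < σ := by rw [hσ]; positivity
  have hσ2 : 4*σ^2 = -m1^4 - m2^4 - m3^4 + 2*m1^2*m2^2 + 2*m1^2*m3^2 + 2*m2^2*m3^2 := by
    rw [hσ, mul_pow, Real.sq_sqrt hval.le]; ring
  have hs1 : σ^2 = (2*(m1^2)*(m2^2)+2*(m1^2)*(m3^2)+2*(m2^2)*(m3^2)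
      -(m1^2)^2-(m2^2)^2-(m3^2)^2)/4 := by linear_combination (1/4) * hσ2
  have hs2 : σ^2 = (2*(m2^2)*(m1^2)+2*(m2^2)*(m3^2)+2*(m1^2)*(m3^2)
      -(m2^2)^2-(m1^2)^2-(m3^2)^2)/4 := by linear_combination (1/4) * hσ2
  have hs3 : σ^2 = (2*(m3^2)*(m1^2)+2*(m3^2)*(m2^2)+2*(m1^2)*(m2^2)
      -(m3^2)^2-(m1^2)^2-(m2^2)^2)/4 := by linear_combination (1/4) * hσ2
  -- vertex-local forms of the K's
  have hK1a : K1 = 2*((x2-x1)*(x3-x1) + (y2-y1)*(y3-y1))*σ + (m2^2+m3^2-m1^2)*S := by rw [hK1, hu, hv, hw]; ring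
  have hK2a : K2 = 2*(((x1-x2)^2 + (y1-y2)^2)-((x2-x1)*(x3-x1) + (y2-y1)*(y3-y1)))*σ + (m1^2+m3^2-m2^2)*S := by rw [hK2, hu, hv, hw]; ring
  have hK3a : K3 = 2*(((x1-x3)^2 + (y1-y3)^2)-((x2-x1)*(x3-x1) + (y2-y1)*(y3-y1)))*σ + (m1^2+m2^2-m3^2)*S := by rw [hK3, hu, hv, hw]; ring
  have hK2b : K2 = 2*((x1-x2)*(x3-x2) + (y1-y2)*(y3-y2))*σ + (m1^2+m3^2-m2^2)*S := by rw [hK2, hu, hv, hw]; ring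
  have hK1b : K1 = 2*(((x1-x2)^2 + (y1-y2)^2)-((x1-x2)*(x3-x2) + (y1-y2)*(y3-y2)))*σ + (m2^2+m3^2-m1^2)*S := by rw [hK1, hu, hv, hw]; ring
  have hK3b : K3 = 2*(((x2-x3)^2 + (y2-y3)^2)-((x1-x2)*(x3-x2) + (y1-y2)*(y3-y2)))*σ + (m2^2+m1^2-m3^2)*S := by rw [hK3, hu, hv, hw]; ring
  have hK3c : K3 = 2*((x1-x3)*(x2-x3) + (y1-y3)*(y2-y3))*σ + (m1^2+m2^2-m3^2)*S := by rw [hK3, hu, hv, hw]; ring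
  have hK1c : K1 = 2*(((x1-x3)^2 + (y1-y3)^2)-((x1-x3)*(x2-x3) + (y1-y3)*(y2-y3)))*σ + (m3^2+m2^2-m1^2)*S := by rw [hK1, hu, hv, hw]; ring
  have hK2c : K2 = 2*(((x2-x3)^2 + (y2-y3)^2)-((x1-x3)*(x2-x3) + (y1-y3)*(y2-y3)))*σ + (m3^2+m1^2-m2^2)*S := by rw [hK2, hu, hv, hw]; ring
  -- positivity of the K's
  have hK10 : 0 < K1 := by
    have key := sin_add_pos' (((x2-x1)*(x3-x1) + (y2-y1)*(y3-y1))/(r12*r13)) (S/(r12*r13))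
        ((m2^2+m3^2-m1^2)/(2*m2*m3)) (2*σ/(2*m2*m3))
        (by positivity) (by positivity)
        (by
          rw [div_pow, div_pow, ← add_div,
            div_eq_one_iff_eq (by positivity : ((r12*r13)^2) ≠ 0),
            mul_pow, hu, hv]
          linear_combination hB1)
        (by
          rw [div_pow, div_pow, ← add_div,
            div_eq_one_iff_eq (by positivity : ((2*m2*m3)^2) ≠ 0)]
          linear_combination hσ2)
        (by
          have hW1' : m1^2 < m2^2 + m3^2 + 2*m2*m3*(((x2-x1)*(x3-x1) + (y2-y1)*(y3-y1))/(r12*r13)) := by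
            rw [hc1] at hW1; exact hW1
          exact aux_CP hm2 hm3 hW1')
    have e : K1 = (2*m2*m3*(r12*r13)) * ((2*σ/(2*m2*m3))*(((x2-x1)*(x3-x1) + (y2-y1)*(y3-y1))/(r12*r13))
        + ((m2^2+m3^2-m1^2)/(2*m2*m3))*(S/(r12*r13))) := by
      rw [hK1a]; field_simp
    rw [e]; exact mul_pos (by positivity) key
  have hK20 : 0 < K2 := by
    have key := sin_add_pos' (((x1-x2)*(x3-x2) + (y1-y2)*(y3-y2))/(r12*r23)) (S/(r12*r23))
        ((m1^2+m3^2-m2^2)/(2*m1*m3)) (2*σ/(2*m1*m3))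
        (by positivity) (by positivity)
        (by
          rw [div_pow, div_pow, ← add_div,
            div_eq_one_iff_eq (by positivity : ((r12*r23)^2) ≠ 0),
            mul_pow, hu, hw]
          linear_combination hB2)
        (by
          rw [div_pow, div_pow, ← add_div,
            div_eq_one_iff_eq (by positivity : ((2*m1*m3)^2) ≠ 0)]
          linear_combination hσ2)
        (by
          have hW2' : m2^2 < m1^2 + m3^2 + 2*m1*m3*(((x1-x2)*(x3-x2) + (y1-y2)*(y3-y2))/(r12*r23)) := by
            rw [hc2] at hW2; exact hW2
          exact aux_CP hm1 hm3 hW2')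
    have e : K2 = (2*m1*m3*(r12*r23)) * ((2*σ/(2*m1*m3))*(((x1-x2)*(x3-x2) + (y1-y2)*(y3-y2))/(r12*r23))
        + ((m1^2+m3^2-m2^2)/(2*m1*m3))*(S/(r12*r23))) := by
      rw [hK2b]; field_simp
    rw [e]; exact mul_pos (by positivity) key
  have hK30 : 0 < K3 := by
    have key := sin_add_pos' (((x1-x3)*(x2-x3) + (y1-y3)*(y2-y3))/(r13*r23)) (S/(r13*r23))
        ((m1^2+m2^2-m3^2)/(2*m1*m2)) (2*σ/(2*m1*m2))
        (by positivity) (by positivity)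
        (by
          rw [div_pow, div_pow, ← add_div,
            div_eq_one_iff_eq (by positivity : ((r13*r23)^2) ≠ 0),
            mul_pow, hv, hw]
          linear_combination hB3)
        (by
          rw [div_pow, div_pow, ← add_div,
            div_eq_one_iff_eq (by positivity : ((2*m1*m2)^2) ≠ 0)]
          linear_combination hσ2)
        (by
          have hW3' : m3^2 < m1^2 + m2^2 + 2*m1*m2*(((x1-x3)*(x2-x3) + (y1-y3)*(y2-y3))/(r13*r23)) := by
            rw [hc3] at hW3; exact hW3
          exact aux_CP hm1 hm2 hW3')
    have e : K3 = (2*m1*m2*(r13*r23)) * ((2*σ/(2*m1*m2))*(((x1-x3)*(x2-x3) + (y1-y3)*(y2-y3))/(r13*r23))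
        + ((m1^2+m2^2-m3^2)/(2*m1*m2))*(S/(r13*r23))) := by
      rw [hK3c]; field_simp
    rw [e]; exact mul_pos (by positivity) key
  -- d > 0
  have hd' : 2*σ*d = m1^2*K1 + m2^2*K2 + m3^2*K3 := by
    rw [hd]; field_simp
  have hKsum : 0 < m1^2*K1 + m2^2*K2 + m3^2*K3 := by
    have a1 : 0 < m1^2*K1 := mul_pos (by positivity) hK10
    have a2 : 0 < m2^2*K2 := mul_pos (by positivity) hK20
    have a3 : 0 < m3^2*K3 := mul_pos (by positivity) hK30
    linarith
  have hd0 : 0 < d := by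
    rw [hd]; exact div_pos hKsum (by positivity)
  -- the key identity  K1K2+K1K3+K2K3 = 4Sσd
  have hIsum := keyI' σ S ((x1-x2)^2 + (y1-y2)^2) ((x1-x3)^2 + (y1-y3)^2) ((x2-x1)*(x3-x1) + (y2-y1)*(y3-y1)) (m1^2) (m2^2) (m3^2) K1 K2 K3
      hs1 hB1 hK1a hK2a hK3a
  have hI : K1*K2 + K1*K3 + K2*K3 = 4*S*σ*d := by
    linear_combination hIsum - 2*S*hd'
  have hKK0 : 0 < K1*K2 + K1*K3 + K2*K3 := by
    have := mul_pos hK10 hK20; have := mul_pos hK10 hK30; have := mul_pos hK20 hK30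
    linarith
  -- difference formulas
  have hxs1 : xs - x1 = K1*(K3*(x2-x1) + K2*(x3-x1)) / (4*S*σ*d) := by
    rw [hxs, ← hI]; field_simp [hK10.ne', hK20.ne', hK30.ne', hKK0.ne']; ring
  have hxs2 : xs - x2 = K2*(K3*(x1-x2) + K1*(x3-x2)) / (4*S*σ*d) := by
    rw [hxs, ← hI]; field_simp [hK10.ne', hK20.ne', hK30.ne', hKK0.ne']; ring
  have hxs3 : xs - x3 = K3*(K2*(x1-x3) + K1*(x2-x3)) / (4*S*σ*d) := by
    rw [hxs, ← hI]; field_simp [hK10.ne', hK20.ne', hK30.ne', hKK0.ne']; ring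
  have hys1 : ys - y1 = K1*(K3*(y2-y1) + K2*(y3-y1)) / (4*S*σ*d) := by
    rw [hys, ← hI]; field_simp [hK10.ne', hK20.ne', hK30.ne', hKK0.ne']; ring
  have hys2 : ys - y2 = K2*(K3*(y1-y2) + K1*(y3-y2)) / (4*S*σ*d) := by
    rw [hys, ← hI]; field_simp [hK10.ne', hK20.ne', hK30.ne', hKK0.ne']; ring
  have hys3 : ys - y3 = K3*(K2*(y1-y3) + K1*(y2-y3)) / (4*S*σ*d) := by
    rw [hys, ← hI]; field_simp [hK10.ne', hK20.ne', hK30.ne', hKK0.ne']; ring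
  -- squared-length identities (via keyL')
  have hL1 := keyL' σ S ((x1-x2)^2 + (y1-y2)^2) ((x1-x3)^2 + (y1-y3)^2) ((x2-x1)*(x3-x1) + (y2-y1)*(y3-y1)) (m1^2) (m2^2) (m3^2) K1 K2 K3
      hs1 hB1 hK1a hK2a hK3a
  have hL2 := keyL' σ S ((x1-x2)^2 + (y1-y2)^2) ((x2-x3)^2 + (y2-y3)^2) ((x1-x2)*(x3-x2) + (y1-y2)*(y3-y2)) (m2^2) (m1^2) (m3^2) K2 K1 K3
      hs2 hB2 hK2b hK1b hK3b
  have hL3 := keyL' σ S ((x1-x3)^2 + (y1-y3)^2) ((x2-x3)^2 + (y2-y3)^2) ((x1-x3)*(x2-x3) + (y1-y3)*(y2-y3)) (m3^2) (m1^2) (m2^2) K3 K1 K2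
      hs3 hB3 hK3c hK1c hK2c
  have hQ1 : (K3*(x2-x1)+K2*(x3-x1))^2 + (K3*(y2-y1)+K2*(y3-y1))^2
      = 4*m1^2*S^2*d := by
    have h2 : (2*σ) * ((K3*(x2-x1)+K2*(x3-x1))^2 + (K3*(y2-y1)+K2*(y3-y1))^2)
        = (2*σ) * (4*m1^2*S^2*d) := by
      linear_combination hL1 - 4*m1^2*S^2*hd'
    exact mul_left_cancel₀ (by positivity) h2
  have hQ2 : (K3*(x1-x2)+K1*(x3-x2))^2 + (K3*(y1-y2)+K1*(y3-y2))^2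
      = 4*m2^2*S^2*d := by
    have h2 : (2*σ) * ((K3*(x1-x2)+K1*(x3-x2))^2 + (K3*(y1-y2)+K1*(y3-y2))^2)
        = (2*σ) * (4*m2^2*S^2*d) := by
      linear_combination hL2 - 4*m2^2*S^2*hd'
    exact mul_left_cancel₀ (by positivity) h2
  have hQ3 : (K2*(x1-x3)+K1*(x2-x3))^2 + (K2*(y1-y3)+K1*(y2-y3))^2
      = 4*m3^2*S^2*d := by
    have h2 : (2*σ) * ((K2*(x1-x3)+K1*(x2-x3))^2 + (K2*(y1-y3)+K1*(y2-y3))^2)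
        = (2*σ) * (4*m3^2*S^2*d) := by
      linear_combination hL3 - 4*m3^2*S^2*hd'
    exact mul_left_cancel₀ (by positivity) h2
  -- closed forms for the three distances
  have hsd0 : 0 < Real.sqrt d := Real.sqrt_pos.mpr hd0
  have hsd2 : (Real.sqrt d)^2 = d := Real.sq_sqrt hd0.le
  have hden : (2*σ*Real.sqrt d)^2 = 4*σ^2*d := by
    rw [mul_pow, mul_pow, hsd2]; ring
  have hρ1 : Real.sqrt ((xs-x1)^2 + (ys-y1)^2) = m1*K1/(2*σ*Real.sqrt d) := by
    have e1 : (xs-x1)^2 + (ys-y1)^2 = m1^2*K1^2/(4*σ^2*d) := by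
      rw [hxs1, hys1, div_pow, div_pow, ← add_div,
        div_eq_div_iff (by positivity) (by positivity)]
      linear_combination (K1^2 * (4*σ^2*d)) * hQ1
    have e2 : (m1*K1/(2*σ*Real.sqrt d))^2 = m1^2*K1^2/(4*σ^2*d) := by
      rw [div_pow, hden]; ring
    rw [e1, ← e2, Real.sqrt_sq (by positivity : (0:ℝ) ≤ m1*K1/(2*σ*Real.sqrt d))]
  have hρ2 : Real.sqrt ((xs-x2)^2 + (ys-y2)^2) = m2*K2/(2*σ*Real.sqrt d) := by
    have e1 : (xs-x2)^2 + (ys-y2)^2 = m2^2*K2^2/(4*σ^2*d) := by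
      rw [hxs2, hys2, div_pow, div_pow, ← add_div,
        div_eq_div_iff (by positivity) (by positivity)]
      linear_combination (K2^2 * (4*σ^2*d)) * hQ2
    have e2 : (m2*K2/(2*σ*Real.sqrt d))^2 = m2^2*K2^2/(4*σ^2*d) := by
      rw [div_pow, hden]; ring
    rw [e1, ← e2, Real.sqrt_sq (by positivity : (0:ℝ) ≤ m2*K2/(2*σ*Real.sqrt d))]
  have hρ3 : Real.sqrt ((xs-x3)^2 + (ys-y3)^2) = m3*K3/(2*σ*Real.sqrt d) := by
    have e1 : (xs-x3)^2 + (ys-y3)^2 = m3^2*K3^2/(4*σ^2*d) := by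
      rw [hxs3, hys3, div_pow, div_pow, ← add_div,
        div_eq_div_iff (by positivity) (by positivity)]
      linear_combination (K3^2 * (4*σ^2*d)) * hQ3
    have e2 : (m3*K3/(2*σ*Real.sqrt d))^2 = m3^2*K3^2/(4*σ^2*d) := by
      rw [div_pow, hden]; ring
    rw [e1, ← e2, Real.sqrt_sq (by positivity : (0:ℝ) ≤ m3*K3/(2*σ*Real.sqrt d))]
  constructor
  · rw [hρ1, hρ2, hρ3, hxs1, hxs2, hxs3]
    field_simp [hm1.ne', hm2.ne', hm3.ne', hK10.ne', hK20.ne', hK30.ne',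
      hS0.ne', hσ0.ne', hd0.ne', hsd0.ne']
    ring
  · rw [hρ1, hρ2, hρ3, hys1, hys2, hys3]
    field_simp [hm1.ne', hm2.ne', hm3.ne', hK10.ne', hK20.ne', hK30.ne',
      hS0.ne', hσ0.ne', hd0.ne', hsd0.ne']
    ring
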